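/- Fix a finite monoid M and a bound h. There exists a constant B, depending only on h and |M|, such that in every μ-forest of height at most h (for any morphism μ : Σ* → M and any nonempty word), every leaf points to at most B leaves. -/

import Mathlib

inductive Forest (A : Type) : Type
  | leaf : A → Forest A
  | node : List (Forest A) → Forest A

namespace Forest

mutual
  /-- The word spelled out by the leaves of a forest, from left to right. -/
  def word {A : Type} : Forest A → List A
    | .leaf a => [a]
    | .node l => wordList l
  def wordList {A : Type} : List (Forest A) → List A
    | [] => []
    | t :: l => t.word ++ wordList l
end

mutual
  /-- The paths (sequences of child indices, from the root) of the leaves of a forest,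
  in left-to-right order; the `i`-th entry is the path of the leaf carrying position `i`
  of `F.word`. -/
  def leafPaths {A : Type} : Forest A → List (List ℕ)
    | .leaf _ => [[]]
    | .node l => leafPathsList 0 l
  def leafPathsList {A : Type} : ℕ → List (Forest A) → List (List ℕ)
    | _, [] => []
    | n, t :: l => (t.leafPaths.map (n :: ·)) ++ leafPathsList (n + 1) l
end

def children {A : Type} : Forest A → List (Forest A)
  | .leaf _ => []
  | .node l => l

/-- The subtree of a forest at a given path, if it exists. -/
def subtreeAt? {A : Type} : Forest A → List ℕ → Option (Forest A)
  | F, [] => some F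
  | F, n :: p =>
    match F.children[n]? with
    | some t => t.subtreeAt? p
    | none => none

end Forest

/-- `IsForest μ c F` says `F` is a `μ`-forest (`c` standing for the cardinality `|M|`). -/
inductive IsForest {A M : Type} [Monoid M] (μ : List A → M) (c : ℕ) : Forest A → Prop
  | leaf (a : A) : IsForest μ c (.leaf a)
  | node (l : List (Forest A)) (h2 : 2 ≤ l.length)
      (hrec : ∀ t ∈ l, IsForest μ c t)
      (h3 : 3 ≤ l.length →
        ∃ m : M, (∀ t ∈ l, μ t.word = m) ∧ m ^ c = m ^ (c + 1)) :
      IsForest μ c (.node l)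

/-- `q` is a sibling of `p` at distance `d` in the left-to-right order of siblings
(every node is its own sibling at distance 0). -/
def SiblingAtDist (p q : List ℕ) (d : ℕ) : Prop :=
  (p = q ∧ d = 0) ∨
    ∃ (r : List ℕ) (a b : ℕ), p = r ++ [a] ∧ q = r ++ [b] ∧ (a - b) + (b - a) = d

/-- Node `p` observes node `q` when `q` is a sibling at distance at most `c` of an
ancestor of `p` (a node being its own ancestor). -/
def Observes (c : ℕ) (p q : List ℕ) : Prop :=
  ∃ r : List ℕ, r <+: p ∧ ∃ d ≤ c, SiblingAtDist r q d

/-- A node is iterable when it has at least `c` left siblings and at least `c` right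
siblings (not counting itself). -/
def Iterable {A : Type} (F : Forest A) (c : ℕ) (p : List ℕ) : Prop :=
  ∃ (r : List ℕ) (a : ℕ), p = r ++ [a] ∧ c ≤ a ∧
    ∃ t, F.subtreeAt? r = some t ∧ a + c + 1 ≤ t.children.length

/-- `anc` is the anchor of the leaf with path `lf`: its lowest iterable ancestor if one
exists, and otherwise the root. -/
def IsAnchor {A : Type} (F : Forest A) (c : ℕ) (lf anc : List ℕ) : Prop :=
  (anc <+: lf ∧ Iterable F c anc ∧
    ∀ q, q <+: lf → Iterable F c q → q.length ≤ anc.length)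
  ∨ ((∀ q, q <+: lf → ¬ Iterable F c q) ∧ anc = [])

/-- The leaf carrying position `i` points to the leaf carrying position `j`:
the anchor of the former observes the anchor of the latter. -/
def PointsTo {A : Type} (F : Forest A) (c : ℕ) (i j : ℕ) : Prop :=
  ∃ pi pj ai aj, F.leafPaths[i]? = some pi ∧ F.leafPaths[j]? = some pj ∧
    IsAnchor F c pi ai ∧ IsAnchor F c pj aj ∧ Observes c ai aj

namespace Forest
mutual
  /-- The height of a forest: maximal nesting depth of internal nodes; a leaf has height 0. -/
  def height {A : Type} : Forest A → ℕ
    | .leaf _ => 0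
    | .node l => heightList l + 1
  def heightList {A : Type} : List (Forest A) → ℕ
    | [] => 0
    | t :: l => max t.height (heightList l)
end
end Forest


namespace Stmt9Aux

open Forest

/-! ### Basic facts about `leafPaths` -/

lemma mem_leafPathsList {A : Type} (l : List (Forest A)) :
    ∀ (n : ℕ) (p : List ℕ), p ∈ Forest.leafPathsList n l ↔
      ∃ k, ∃ hk : k < l.length, ∃ p', p = (n + k) :: p' ∧ p' ∈ l[k].leafPaths := by
  induction l with
  | nil => intro n p; simp [Forest.leafPathsList]
  | cons t l ih =>
    intro n p
    simp only [Forest.leafPathsList, List.mem_append, List.mem_map, ih]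
    constructor
    · rintro (⟨p', hp', rfl⟩ | ⟨k, hk, p', rfl, hp'⟩)
      · exact ⟨0, by simp, p', by simp, hp'⟩
      · refine ⟨k + 1, by simpa using hk, p', by simp; omega, ?_⟩
        simpa using hp'
    · rintro ⟨k, hk, p', rfl, hp'⟩
      cases k with
      | zero => exact Or.inl ⟨p', by simpa using hp', by simp⟩
      | succ k =>
        refine Or.inr ⟨k, by simpa using hk, p', by simp; omega, ?_⟩
        simpa using hp'

lemma heightList_le {A : Type} {l : List (Forest A)} {t : Forest A} (ht : t ∈ l) :
    t.height ≤ Forest.heightList l := by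
  induction l with
  | nil => simp at ht
  | cons s l ih =>
    rcases List.mem_cons.1 ht with rfl | ht
    · rw [Forest.heightList]; exact le_max_left _ _
    · rw [Forest.heightList]; exact (ih ht).trans (le_max_right _ _)

lemma leafPaths_spec {A : Type} (F : Forest A) :
    ∀ p ∈ F.leafPaths, p.length ≤ F.height ∧
      ∀ q a, q ++ [a] <+: p → ∃ t, F.subtreeAt? q = some t ∧ a < t.children.length := by
  induction F using Forest.rec
    (motive_2 := fun l => ∀ t ∈ l, ∀ p ∈ t.leafPaths, p.length ≤ t.height ∧
      ∀ q a, q ++ [a] <+: p → ∃ s, t.subtreeAt? q = some s ∧ a < s.children.length) with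
  | leaf a =>
    intro p hp
    simp [Forest.leafPaths] at hp
    subst hp
    refine ⟨by simp [Forest.height], ?_⟩
    intro q a hq
    rw [List.prefix_nil] at hq
    simp at hq
  | node l ih =>
    intro p hp
    rw [Forest.leafPaths, mem_leafPathsList] at hp
    obtain ⟨k, hk, p', rfl, hp'⟩ := hp
    simp only [Nat.zero_add]
    obtain ⟨hlen, hval⟩ := ih l[k] (l.getElem_mem hk) p' hp'
    constructor
    · rw [Forest.height]
      have := heightList_le (l.getElem_mem hk)
      simpa using Nat.succ_le_succ (hlen.trans this)
    · intro q a hq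
      match q with
      | [] =>
        have hak : a = k := by
          rcases hq with ⟨s, hs⟩
          have := congrArg (fun u => u.head?) hs
          simp at this
          omega
        subst hak
        exact ⟨.node l, rfl, by simpa [Forest.children] using hk⟩
      | b :: q' =>
        have hb : b = k ∧ q' ++ [a] <+: p' := by
          rcases hq with ⟨s, hs⟩
          simp only [List.cons_append, List.cons.injEq] at hs
          exact ⟨hs.1, ⟨s, hs.2⟩⟩
        obtain ⟨rfl, hq'⟩ := hb
        obtain ⟨s, hs1, hs2⟩ := hval q' a hq'
        refine ⟨s, ?_, hs2⟩
        rw [Forest.subtreeAt?]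
        simp only [Forest.children, List.getElem?_eq_getElem hk]
        exact hs1
  | nil => rename_i t ht p hp; simp at ht
  | cons t l ih1 ih2 =>
    rename_i s hs p hp
    rcases List.mem_cons.1 hs with rfl | hs
    · exact ih1 p hp
    · exact ih2 s hs p hp

lemma head_mem_leafPathsList {A : Type} {l : List (Forest A)} {n : ℕ} {p : List ℕ}
    (hp : p ∈ Forest.leafPathsList n l) : ∃ m p', n ≤ m ∧ p = m :: p' := by
  rw [mem_leafPathsList] at hp
  obtain ⟨k, hk, p', rfl, -⟩ := hp
  exact ⟨n + k, p', Nat.le_add_right _ _, rfl⟩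

lemma nodup_leafPathsList {A : Type} {l : List (Forest A)}
    (hl : ∀ t ∈ l, t.leafPaths.Nodup) : ∀ n, (Forest.leafPathsList n l).Nodup := by
  induction l with
  | nil => intro n; simp [Forest.leafPathsList]
  | cons t l ih =>
    intro n
    rw [Forest.leafPathsList]
    refine List.Nodup.append ?_ (ih (fun s hs => hl s (List.mem_cons_of_mem _ hs)) (n + 1)) ?_
    · exact (hl t List.mem_cons_self).map (fun a b hab => by simpa using hab)
    · intro x hx hy
      obtain ⟨p', -, rfl⟩ := List.mem_map.1 hx
      obtain ⟨m, p'', hm, heq⟩ := head_mem_leafPathsList hy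
      simp only [List.cons.injEq] at heq
      omega

lemma nodup_leafPaths {A : Type} (F : Forest A) : F.leafPaths.Nodup := by
  induction F using Forest.rec
    (motive_2 := fun l => ∀ t ∈ l, t.leafPaths.Nodup) with
  | leaf a => simp [Forest.leafPaths]
  | node l ih => rw [Forest.leafPaths]; exact nodup_leafPathsList ih 0
  | nil => rename_i t ht; simp at ht
  | cons t l ih1 ih2 =>
    rename_i s hs
    rcases List.mem_cons.1 hs with rfl | hs
    · exact ih1
    · exact ih2 s hs

/-! ### Candidate lists -/

/-- Number of children of the subtree at `p` (0 if no subtree there). -/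
def lenAt {A : Type} (F : Forest A) (p : List ℕ) : ℕ :=
  match F.subtreeAt? p with
  | some t => t.children.length
  | none => 0

/-- A list containing every valid non-iterable child index, of length `2 * c`. -/
def nonIterIdx (c L : ℕ) : List ℕ :=
  List.range c ++ (List.range c).map (fun i => L - c + i)

lemma length_nonIterIdx (c L : ℕ) : (nonIterIdx c L).length = 2 * c := by
  simp [nonIterIdx]; ring

lemma mem_nonIterIdx {a L c : ℕ} (hval : a < L) (hni : ¬ (c ≤ a ∧ a + c + 1 ≤ L)) :
    a ∈ nonIterIdx c L := by
  simp only [nonIterIdx, List.mem_append, List.mem_range, List.mem_map]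
  by_cases hac : a < c
  · exact Or.inl hac
  · exact Or.inr ⟨a - (L - c), by omega, by omega⟩

/-- All descendants of `p` reachable in `≤ k` steps using only non-iterable indices. -/
def ext {A : Type} (F : Forest A) (c : ℕ) : ℕ → List ℕ → List (List ℕ)
  | 0, p => [p]
  | k+1, p => p :: (nonIterIdx c (lenAt F p)).flatMap (fun a => ext F c k (p ++ [a]))

def extLen (c : ℕ) : ℕ → ℕ
  | 0 => 1
  | k+1 => 1 + 2 * c * extLen c k

lemma length_flatMap_const {α β : Type*} (l : List α) (f : α → List β) (k : ℕ)
    (hf : ∀ a ∈ l, (f a).length = k) : (l.flatMap f).length = l.length * k := by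
  induction l with
  | nil => simp
  | cons a l ih =>
    rw [List.flatMap_cons, List.length_append, hf a List.mem_cons_self,
      ih (fun b hb => hf b (List.mem_cons_of_mem _ hb))]
    simp [Nat.succ_mul]; ring

lemma length_ext {A : Type} (F : Forest A) (c : ℕ) :
    ∀ (k : ℕ) (p : List ℕ), (ext F c k p).length = extLen c k := by
  intro k
  induction k with
  | zero => intro p; rfl
  | succ k ih =>
    intro p
    rw [ext, extLen, List.length_cons,
      length_flatMap_const _ _ (extLen c k) (fun a _ => ih _), length_nonIterIdx]
    ring

lemma mem_ext {A : Type} (F : Forest A) (c : ℕ) :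
    ∀ (k : ℕ) (p s : List ℕ), s.length ≤ k →
      (∀ s₁ a, s₁ ++ [a] <+: s → a ∈ nonIterIdx c (lenAt F (p ++ s₁))) →
      p ++ s ∈ ext F c k p := by
  intro k
  induction k with
  | zero =>
    intro p s hs _
    rw [Nat.le_zero, List.length_eq_zero_iff] at hs
    subst hs
    simp [ext]
  | succ k ih =>
    intro p s hs hcond
    match s with
    | [] => simp [ext]
    | a :: s' =>
      rw [ext]
      refine List.mem_cons_of_mem _ (List.mem_flatMap.2 ⟨a, ?_, ?_⟩)
      · have := hcond [] a ⟨s', rfl⟩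
        simpa using this
      · have h1 : p ++ a :: s' = (p ++ [a]) ++ s' := by simp
        rw [h1]
        refine ih (p ++ [a]) s' (by simpa using hs) ?_
        intro s₁ b hb
        have h2 : (p ++ [a]) ++ s₁ = p ++ (a :: s₁) := by simp
        rw [h2]
        refine hcond (a :: s₁) b ?_
        obtain ⟨u, hu⟩ := hb
        exact ⟨u, by simp [← hu]⟩

/-- Candidate anchors observed from an ancestor of `pi`. -/
def sibCands (c : ℕ) (r : List ℕ) : List (List ℕ) :=
  r :: (List.range (2 * c + 1)).map (fun i => r.dropLast ++ [r.getLastD 0 + i - c])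

lemma length_sibCands (c : ℕ) (r : List ℕ) : (sibCands c r).length = 2 * c + 2 := by
  simp [sibCands]

def anchorCands (c : ℕ) (pi : List ℕ) : List (List ℕ) :=
  pi.inits.flatMap (sibCands c)

lemma length_anchorCands (c : ℕ) (pi : List ℕ) :
    (anchorCands c pi).length = (pi.length + 1) * (2 * c + 2) := by
  rw [anchorCands, length_flatMap_const _ _ (2 * c + 2) (fun r _ => length_sibCands c r),
    List.length_inits]

lemma mem_anchorCands {c : ℕ} {pi ai aj : List ℕ} (hai : ai <+: pi)
    (hobs : Observes c ai aj) : aj ∈ anchorCands c pi := by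
  obtain ⟨r, hr, d, hd, hsib⟩ := hobs
  have hrpi : r ∈ pi.inits := (List.mem_inits _ _).2 (hr.trans hai)
  refine List.mem_flatMap.2 ⟨r, hrpi, ?_⟩
  rcases hsib with ⟨rfl, -⟩ | ⟨u, a, b, rfl, rfl, hab⟩
  · exact List.mem_cons_self
  · refine List.mem_cons_of_mem _ (List.mem_map.2 ⟨c + b - a, ?_, ?_⟩)
    · rw [List.mem_range]; omega
    · have h1 : (u ++ [a]).dropLast = u := by simp
      have h2 : (u ++ [a]).getLastD 0 = a := by simp
      rw [h1, h2]
      congr 1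
      simp only [List.cons.injEq, and_true]
      omega

def candList {A : Type} (F : Forest A) (c h : ℕ) (pi : List ℕ) : List (List ℕ) :=
  (anchorCands c pi).flatMap (ext F c h)

lemma length_candList {A : Type} (F : Forest A) (c h : ℕ) (pi : List ℕ) :
    (candList F c h pi).length = (pi.length + 1) * (2 * c + 2) * extLen c h := by
  rw [candList, length_flatMap_const _ _ (extLen c h) (fun p _ => length_ext F c h p),
    length_anchorCands]

/-! ### Anchors -/

lemma isAnchor_prefix {A : Type} {F : Forest A} {c : ℕ} {lf anc : List ℕ}
    (h : IsAnchor F c lf anc) : anc <+: lf := by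
  rcases h with ⟨h, -⟩ | ⟨-, rfl⟩
  · exact h
  · exact List.nil_prefix

lemma isAnchor_not_iterable {A : Type} {F : Forest A} {c : ℕ} {lf anc : List ℕ}
    (h : IsAnchor F c lf anc) {q : List ℕ} (hq : q <+: lf) (hlen : anc.length < q.length) :
    ¬ Iterable F c q := by
  rcases h with ⟨-, -, hmin⟩ | ⟨hall, -⟩
  · intro hit
    exact absurd (hmin q hq hit) (by omega)
  · exact hall q hq

lemma pj_mem_candList {A : Type} {F : Forest A} {c h : ℕ} {pi pj aj : List ℕ}
    (hpj : pj ∈ F.leafPaths) (hanc : IsAnchor F c pj aj)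
    (haj : aj ∈ anchorCands c pi) (hht : F.height ≤ h) :
    pj ∈ candList F c h pi := by
  refine List.mem_flatMap.2 ⟨aj, haj, ?_⟩
  obtain ⟨s, rfl⟩ := (isAnchor_prefix hanc)
  have hspec := leafPaths_spec F _ hpj
  refine mem_ext F c h aj s ?_ ?_
  · have := hspec.1.trans hht
    simp only [List.length_append] at this
    omega
  · intro s₁ a hpre
    have hqpre : (aj ++ s₁) ++ [a] <+: aj ++ s := by
      obtain ⟨u, hu⟩ := hpre
      exact ⟨u, by simp [← hu]⟩
    obtain ⟨t, ht1, ht2⟩ := hspec.2 (aj ++ s₁) a hqpre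
    have hlen : lenAt F (aj ++ s₁) = t.children.length := by
      rw [lenAt, ht1]
    have hni : ¬ Iterable F c ((aj ++ s₁) ++ [a]) := by
      refine isAnchor_not_iterable hanc hqpre ?_
      simp only [List.length_append, List.length_cons]
      omega
    rw [hlen]
    refine mem_nonIterIdx ht2 ?_
    rintro ⟨hca, hac⟩
    exact hni ⟨aj ++ s₁, a, rfl, hca, t, ht1, hac⟩

end Stmt9Aux

theorem stmt9 {M : Type} [Monoid M] [Fintype M] (h : ℕ) :
    ∃ B : ℕ, ∀ (A : Type) (μ : List A → M) (F : Forest A),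
      IsForest μ (Fintype.card M) F → F.height ≤ h →
      ∀ i : ℕ, i < F.leafPaths.length →
        Set.ncard {j : ℕ | PointsTo F (Fintype.card M) i j} ≤ B := by
  set c := Fintype.card M with hc
  refine ⟨(h + 1) * (2 * c + 2) * Stmt9Aux.extLen c h, ?_⟩
  intro A μ F _hF hht i hi
  set pi := F.leafPaths[i] with hpi
  have hpi? : F.leafPaths[i]? = some pi := List.getElem?_eq_getElem hi
  set L := Stmt9Aux.candList F c h pi with hL
  -- every pointed-to leaf index maps to the index of its path in `L`
  have key : ∀ j ∈ {j : ℕ | PointsTo F c i j}, ∃ pj, F.leafPaths[j]? = some pj ∧ pj ∈ L := by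
    intro j hj
    obtain ⟨pi', pj, ai, aj, hpi'?, hpj?, hanci, hancj, hobs⟩ := hj
    have hpieq : pi' = pi := by
      rw [hpi?] at hpi'?; exact (Option.some_injective _ hpi'?).symm
    subst hpieq
    have hajmem : aj ∈ Stmt9Aux.anchorCands c pi :=
      Stmt9Aux.mem_anchorCands (Stmt9Aux.isAnchor_prefix hanci) hobs
    have hpjmem : pj ∈ F.leafPaths := by
      rw [List.getElem?_eq_some_iff] at hpj?
      obtain ⟨hj', rfl⟩ := hpj?
      exact List.getElem_mem hj'
    exact ⟨pj, hpj?, Stmt9Aux.pj_mem_candList hpjmem hancj hajmem hht⟩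
  have hstep : Set.ncard {j : ℕ | PointsTo F c i j} ≤ L.length := by
    have := Set.ncard_le_ncard_of_injOn
      (f := fun j => @List.idxOf (List ℕ) List.instBEq ((F.leafPaths[j]?).getD []) L)
      (s := {j : ℕ | PointsTo F c i j}) (t := ↑(Finset.range L.length))
      (by
        intro j hj
        obtain ⟨pj, hpj?, hpjL⟩ := key j hj
        simp only [hpj?, Option.getD_some, Finset.coe_range, Set.mem_Iio]
        exact List.idxOf_lt_length_iff.2 hpjL)
      (by
        intro j₁ hj₁ j₂ hj₂ hf
        obtain ⟨p₁, hp₁?, hp₁L⟩ := key j₁ hj₁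
        obtain ⟨p₂, hp₂?, hp₂L⟩ := key j₂ hj₂
        simp only [hp₁?, hp₂?, Option.getD_some] at hf
        have hpeq : p₁ = p₂ := (List.idxOf_inj hp₁L).1 hf
        subst hpeq
        have hj₁lt : j₁ < F.leafPaths.length := (List.getElem?_eq_some_iff.1 hp₁?).1
        exact (List.getElem?_inj hj₁lt (Stmt9Aux.nodup_leafPaths F)).1
          (hp₁?.trans hp₂?.symm))
      (Finset.finite_toSet _)
    rwa [Set.ncard_coe_finset, Finset.card_range] at this
  refine hstep.trans ?_
  rw [hL, Stmt9Aux.length_candList]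
  have hpilen : pi.length ≤ h := by
    have hmem : pi ∈ F.leafPaths := List.getElem_mem hi
    exact ((Stmt9Aux.leafPaths_spec F pi hmem).1).trans hht
  exact Nat.mul_le_mul_right _ (Nat.mul_le_mul_right _ (by omega))
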